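/- Let K be a field, A_1,...,A_n nonempty finite subsets of K with d_i = |A_i|, 2 ≤ d_i ≤ d_{i+1} for all i. Let G ∈ K[t_1,...,t_n] have total degree d ≥ 1 with deg_{t_i}(G) ≤ d_i − 1 for all i. Write d = Σ_{i=1}^{k}(d_i − 1) + ℓ with 0 ≤ k ≤ n−1 and 1 ≤ ℓ ≤ d_{k+1} − 1. Then the number of zeros of G in X* = A_1 × ... × A_n satisfies |Z_{X*}(G)| ≤ d_{k+2} ⋯ d_n (d_1 ⋯ d_{k+1} − d_{k+1} + ℓ), with the convention d_{k+2} ⋯ d_n = 1 when k = n−1. -/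

import Mathlib

namespace AF7


/-- Greedy minimal product of `y` with `1 ≤ y i ≤ l i`, `∑ y ≥ S`, for `l` sorted increasing. -/
def mp : List ℕ → ℕ → ℕ
  | [], _ => 1
  | _ :: tl, S => max 1 (S - tl.sum) * mp tl (S - max 1 (S - tl.sum))

lemma mp_mono : ∀ (l : List ℕ) {S T : ℕ}, S ≤ T → mp l S ≤ mp l T
  | [], _, _, _ => le_rfl
  | _ :: tl, S, T, h => by
    simp only [mp]
    exact Nat.mul_le_mul (by omega) (mp_mono tl (by omega))

lemma mp_crux : ∀ (l : List ℕ) (S b : ℕ), 1 ≤ b → (∀ x ∈ l, b ≤ x) → S ≤ b + l.sum →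
    max 1 (S - l.sum) * mp l (S - max 1 (S - l.sum)) ≤ b * mp l (S - b)
  | [], S, b, hb, _, hS => by
    simp only [List.sum_nil] at hS
    simp only [mp, List.sum_nil, mul_one]
    omega
  | e :: rest, S, b, hb, hbl, hS => by
    have he : b ≤ e := hbl e List.mem_cons_self
    have hbr : ∀ x ∈ rest, b ≤ x := fun x hx => hbl x (List.mem_cons_of_mem _ hx)
    have hsum : (e :: rest).sum = e + rest.sum := by simp
    set E := rest.sum with hE
    rw [hsum]
    by_cases hc1 : E + e + 1 ≤ S
    · -- head of goal-LHS is S - E - e ≥ 1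
      have h1 : max 1 (S - (e + E)) = S - E - e := by omega
      have h2 : S - (S - E - e) = E + e := by omega
      rw [h1, h2]
      -- unfold mp on both sides
      have h3 : mp (e :: rest) (E + e) = e * mp rest E := by
        simp only [mp, ← hE]
        have : max 1 (E + e - E) = e := by omega
        rw [this]
        congr 2
        omega
      have h4 : mp (e :: rest) (S - b) = (S - b - E) * mp rest E := by
        simp only [mp, ← hE]
        have : max 1 (S - b - E) = S - b - E := by omega
        rw [this]
        congr 2
        omega
      rw [h3, h4, ← mul_assoc, ← mul_assoc]
      refine Nat.mul_le_mul_right _ ?_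
      -- (S-E-e)*e ≤ b*(S-b-E)
      obtain ⟨P, hP⟩ : ∃ P, S - E - e = P := ⟨_, rfl⟩
      obtain ⟨W, hW⟩ : ∃ W, S - b - E = W := ⟨_, rfl⟩
      rw [hP, hW]
      have h7 : P ≤ b := by omega
      obtain ⟨Q, he', hW'⟩ : ∃ Q, e = b + Q ∧ W = P + Q := ⟨e - b, by omega, by omega⟩
      rw [he', hW']
      calc P * (b + Q) = P * b + P * Q := Nat.mul_add P b Q
        _ ≤ b * P + b * Q := Nat.add_le_add (le_of_eq (Nat.mul_comm P b))
            (Nat.mul_le_mul_right Q h7)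
        _ = b * (P + Q) := (Nat.mul_add b P Q).symm
    · have h1 : max 1 (S - (e + E)) = 1 := by omega
      rw [h1, one_mul]
      by_cases hc2 : S ≤ b + E
      · -- use IH on rest at S - 1
        have IH := mp_crux rest (S - 1) b hb hbr (by omega)
        have hL : mp (e :: rest) (S - 1)
            = max 1 (S - 1 - E) * mp rest (S - 1 - max 1 (S - 1 - E)) := by
          simp only [mp, ← hE]
        have hR : mp (e :: rest) (S - b) = mp rest (S - b - 1) := by
          simp only [mp, ← hE]
          have : max 1 (S - b - E) = 1 := by omega
          rw [this, one_mul]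
        rw [hL, hR]
        calc max 1 (S - 1 - E) * mp rest (S - 1 - max 1 (S - 1 - E))
            ≤ b * mp rest (S - 1 - b) := IH
          _ = b * mp rest (S - b - 1) := by
              congr 2
              omega
      · -- b + E + 1 ≤ S ≤ E + e
        have hL : mp (e :: rest) (S - 1) = (S - 1 - E) * mp rest E := by
          simp only [mp, ← hE]
          have h2 : max 1 (S - 1 - E) = S - 1 - E := by omega
          rw [h2]
          congr 2
          omega
        have hR : mp (e :: rest) (S - b) = (S - b - E) * mp rest E := by
          simp only [mp, ← hE]
          have h2 : max 1 (S - b - E) = S - b - E := by omega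
          rw [h2]
          congr 2
          omega
        rw [hL, hR, ← mul_assoc]
        refine Nat.mul_le_mul_right _ ?_
        -- S - 1 - E ≤ b * (S - b - E)
        obtain ⟨W, hW⟩ : ∃ W, S - b - E = W + 1 := ⟨S - b - E - 1, by omega⟩
        rw [hW]
        calc S - 1 - E = W + b := by omega
          _ ≤ b * W + b := Nat.add_le_add_right (Nat.le_mul_of_pos_left _ hb) _
          _ = b * (W + 1) := by rw [Nat.mul_add, Nat.mul_one]

lemma sum_le_sum_forall₂ : ∀ {y l : List ℕ}, List.Forall₂ (fun a d => 1 ≤ a ∧ a ≤ d) y l →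
    y.sum ≤ l.sum
  | _, _, List.Forall₂.nil => le_rfl
  | _, _, List.Forall₂.cons h hf => by
    simp only [List.sum_cons]
    exact Nat.add_le_add h.2 (sum_le_sum_forall₂ hf)

lemma mp_le_prod : ∀ {y l : List ℕ}, List.Forall₂ (fun a d => 1 ≤ a ∧ a ≤ d) y l →
    l.Pairwise (· ≤ ·) → mp l y.sum ≤ y.prod
  | _, _, List.Forall₂.nil, _ => le_rfl
  | a :: ys, d :: tl, List.Forall₂.cons h hf, hs => by
    obtain ⟨hs1, hs2⟩ := List.pairwise_cons.mp hs
    have crux := mp_crux tl (a + ys.sum) a h.1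
      (fun x hx => le_trans h.2 (hs1 x hx))
      (by have := sum_le_sum_forall₂ hf; omega)
    simp only [List.sum_cons, List.prod_cons]
    calc mp (d :: tl) (a + ys.sum)
        = max 1 (a + ys.sum - tl.sum) *
            mp tl (a + ys.sum - max 1 (a + ys.sum - tl.sum)) := by simp only [mp]
      _ ≤ a * mp tl (a + ys.sum - a) := crux
      _ = a * mp tl ys.sum := by congr 2; omega
      _ ≤ a * ys.prod := Nat.mul_le_mul_left _ (mp_le_prod hf hs2)

lemma mp_sum_eq_prod : ∀ (l : List ℕ), (∀ x ∈ l, 1 ≤ x) → mp l l.sum = l.prod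
  | [], _ => rfl
  | d :: tl, h => by
    have hd : 1 ≤ d := h d List.mem_cons_self
    simp only [mp, List.sum_cons, List.prod_cons]
    have h1 : max 1 (d + tl.sum - tl.sum) = d := by omega
    rw [h1]
    have h2 : d + tl.sum - d = tl.sum := by omega
    rw [h2, mp_sum_eq_prod tl (fun x hx => h x (List.mem_cons_of_mem _ hx))]

lemma length_le_sum : ∀ (l : List ℕ), (∀ x ∈ l, 1 ≤ x) → l.length ≤ l.sum
  | [], _ => le_rfl
  | d :: tl, h => by
    simp only [List.length_cons, List.sum_cons]
    have := length_le_sum tl (fun x hx => h x (List.mem_cons_of_mem _ hx))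
    have := h d List.mem_cons_self
    omega

lemma mp_canonical : ∀ (l1 : List ℕ) (dk m : ℕ) (l2 : List ℕ),
    (∀ x ∈ l1, 1 ≤ x) → (∀ x ∈ l2, 1 ≤ x) → 1 ≤ m → m ≤ dk →
    m * l2.prod ≤ mp (l1 ++ dk :: l2) (l1.length + m + l2.sum)
  | [], dk, m, l2, _, h2, hm1, hm2 => by
    simp only [List.nil_append, List.length_nil, Nat.zero_add]
    simp only [mp]
    have h1 : max 1 (m + l2.sum - l2.sum) = m := by omega
    rw [h1]
    have h3 : m + l2.sum - m = l2.sum := by omega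
    rw [h3, mp_sum_eq_prod l2 h2]
  | d0 :: l1', dk, m, l2, h1, h2, hm1, hm2 => by
    have h1' : ∀ x ∈ l1', 1 ≤ x := fun x hx => h1 x (List.mem_cons_of_mem _ hx)
    have hlen := length_le_sum l1' h1'
    simp only [List.cons_append, List.length_cons, mp, List.append_eq]
    have hs : (l1' ++ dk :: l2).sum = l1'.sum + dk + l2.sum := by simp; omega
    have hmax : max 1 (l1'.length + 1 + m + l2.sum - (l1' ++ dk :: l2).sum) = 1 := by
      rw [hs]; omega
    rw [hmax, one_mul]
    have harg : l1'.length + 1 + m + l2.sum - 1 = l1'.length + m + l2.sum := by omega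
    rw [harg]
    exact mp_canonical l1' dk m l2 h1' h2 hm1 hm2



@[to_additive]
lemma prod_drop_ofFn {M : Type*} [CommMonoid M] :
    ∀ (n : ℕ) (f : Fin n → M) (k : ℕ),
    ((List.ofFn f).drop k).prod = ∏ i ∈ Finset.univ.filter (fun i : Fin n => k ≤ (i : ℕ)), f i
  | 0, f, k => by simp
  | n + 1, f, 0 => by
    simp only [List.drop_zero, List.prod_ofFn, Finset.filter_true_of_mem (fun i _ => Nat.zero_le _)]
  | n + 1, f, k + 1 => by
    rw [List.ofFn_succ, List.drop_succ_cons, prod_drop_ofFn n (fun i => f i.succ) k]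
    rw [Finset.prod_filter, Finset.prod_filter, Fin.prod_univ_succ]
    simp

lemma card_filter_lt_fin (n k : ℕ) (hk : k ≤ n) :
    (Finset.univ.filter (fun i : Fin n => (i : ℕ) < k)).card = k := by
  induction n generalizing k with
  | zero =>
    simp only [Finset.univ_eq_empty, Finset.filter_empty, Finset.card_empty]
    omega
  | succ n IH =>
    rw [Finset.card_filter, Fin.sum_univ_succ]
    rcases Nat.eq_zero_or_pos k with rfl | hk0
    · simp
    · have := IH (k - 1) (by omega)
      rw [Finset.card_filter] at this
      have h2 : (∑ i : Fin n, if (i.succ : ℕ) < k then 1 else 0)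
          = ∑ i : Fin n, if (i : ℕ) < k - 1 then 1 else 0 := by
        refine Finset.sum_congr rfl fun i _ => ?_
        simp only [Fin.val_succ]
        split <;> split <;> omega
      rw [h2, this, if_pos (show ((0 : Fin (n + 1)) : ℕ) < k from hk0)]
      omega

lemma list_ofFn_sorted {n : ℕ} (D : Fin n → ℕ) (hmono : ∀ i j : Fin n, i ≤ j → D i ≤ D j) :
    (List.ofFn D).Pairwise (· ≤ ·) := by
  rw [List.pairwise_iff_get]
  intro i j hij
  rw [List.get_ofFn, List.get_ofFn]
  have h2 : (i : ℕ) ≤ (j : ℕ) := Nat.le_of_lt hij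
  exact hmono _ _ (by rwa [Fin.le_def, Fin.coe_cast, Fin.coe_cast])


lemma comb {n : ℕ} (D y : Fin n → ℕ) (hmono : ∀ i j : Fin n, i ≤ j → D i ≤ D j)
    (k : ℕ) (hk : k < n) (m : ℕ) (hm1 : 1 ≤ m) (hm2 : m ≤ D ⟨k, hk⟩)
    (hy1 : ∀ i, 1 ≤ y i) (hy2 : ∀ i, y i ≤ D i)
    (hS : k + m + (∑ i ∈ Finset.univ.filter fun i : Fin n => k < (i : ℕ), D i) ≤ ∑ i, y i) :
    m * (∏ i ∈ Finset.univ.filter fun i : Fin n => k < (i : ℕ), D i) ≤ ∏ i, y i := by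
  set l := List.ofFn D with hl
  have hsort := list_ofFn_sorted D hmono
  have hf2 : List.Forall₂ (fun a d => 1 ≤ a ∧ a ≤ d) (List.ofFn y) l := by
    rw [List.forall₂_iff_get]
    refine ⟨by simp [hl], fun i h1 h2 => ?_⟩
    rw [List.get_ofFn, List.get_ofFn]
    exact ⟨hy1 _, hy2 _⟩
  have hlb : mp l (List.ofFn y).sum ≤ (List.ofFn y).prod := mp_le_prod hf2 hsort
  have hlen : l.length = n := by simp [hl]
  have hkl : k < l.length := by omega
  have hgetk : l[k] = D ⟨k, hk⟩ := by
    simp [hl, List.getElem_ofFn]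
  have hsplit : l.take k ++ D ⟨k, hk⟩ :: l.drop (k + 1) = l := by
    conv_rhs => rw [← List.take_append_drop k l, List.drop_eq_getElem_cons hkl, hgetk]
  have h1l : ∀ x ∈ l, 1 ≤ x := by
    intro x hx
    rw [hl, List.mem_ofFn] at hx
    obtain ⟨i, rfl⟩ := hx
    exact le_trans (hy1 i) (hy2 i)
  have htk : (l.take k).length = k := by
    rw [List.length_take]; omega
  have hfilter : Finset.univ.filter (fun i : Fin n => k + 1 ≤ (i : ℕ))
      = Finset.univ.filter (fun i : Fin n => k < (i : ℕ)) := by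
    apply Finset.filter_congr
    intro i _
    exact Nat.lt_iff_add_one_le.symm
  have hdropsum : (l.drop (k + 1)).sum
      = ∑ i ∈ Finset.univ.filter fun i : Fin n => k < (i : ℕ), D i := by
    rw [hl, sum_drop_ofFn, hfilter]
  have hdropprod : (l.drop (k + 1)).prod
      = ∏ i ∈ Finset.univ.filter fun i : Fin n => k < (i : ℕ), D i := by
    rw [hl, prod_drop_ofFn, hfilter]
  have hcan := mp_canonical (l.take k) (D ⟨k, hk⟩) m (l.drop (k + 1))
    (fun x hx => h1l x (List.take_subset _ _ hx))
    (fun x hx => h1l x (List.drop_subset _ _ hx)) hm1 hm2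
  rw [hsplit, htk] at hcan
  calc m * (∏ i ∈ Finset.univ.filter fun i : Fin n => k < (i : ℕ), D i)
      = m * (l.drop (k + 1)).prod := by rw [hdropprod]
    _ ≤ mp l (k + m + (l.drop (k + 1)).sum) := hcan
    _ ≤ mp l (List.ofFn y).sum := by
        apply mp_mono
        rw [List.sum_ofFn, hdropsum]
        exact hS
    _ ≤ (List.ofFn y).prod := hlb
    _ = ∏ i, y i := by rw [List.prod_ofFn]

lemma count_split {K : Type*} [DecidableEq K] {n : ℕ} (A : Fin (n + 1) → Finset K)
    (P : (Fin (n + 1) → K) → Prop) [DecidablePred P] :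
    ((Fintype.piFinset A).filter fun x => P x).card
      = ∑ yv ∈ Fintype.piFinset (fun i => A i.succ),
          ((A 0).filter fun a => P (Fin.cons a yv)).card := by
  rw [Finset.card_filter]
  have hsum : ∀ yv, ((A 0).filter fun a => P (Fin.cons a yv)).card
      = ∑ a ∈ A 0, if P (Fin.cons a yv) then 1 else 0 := fun yv => Finset.card_filter _ _
  simp only [hsum]
  rw [← Finset.sum_product']
  refine Finset.sum_nbij' (i := fun x : Fin (n + 1) → K => ((fun j : Fin n => x j.succ), (x 0 : K)))
    (j := fun p : (Fin n → K) × K => Fin.cons p.2 p.1) ?_ ?_ ?_ ?_ ?_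
  · intro x hx
    rw [Fintype.mem_piFinset] at hx
    rw [Finset.mem_product]
    exact ⟨by rw [Fintype.mem_piFinset]; exact fun j => hx j.succ, hx 0⟩
  · intro p hp
    rw [Finset.mem_product] at hp
    obtain ⟨h1, h2⟩ := hp
    rw [Fintype.mem_piFinset] at h1 ⊢
    intro i
    refine Fin.cases ?_ ?_ i
    · simpa using h2
    · intro j
      simpa using h1 j
  · intro x _
    exact Fin.cons_self_tail x
  · intro p _
    refine Prod.ext ?_ ?_ <;> simp
  · intro x _
    congr 1
    exact congrArg P (Fin.cons_self_tail x).symm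

lemma key {K : Type*} [Field K] [DecidableEq K] :
    ∀ (n : ℕ) (A : Fin n → Finset K) (G : MvPolynomial (Fin n) K), G ≠ 0 →
    ∃ u ∈ G.support,
      (∏ i, ((A i).card - u i)) ≤
        ((Fintype.piFinset A).filter fun x => MvPolynomial.eval x G ≠ 0).card := by
  intro n
  induction n with
  | zero =>
    intro A G hG
    obtain ⟨c, rfl⟩ := MvPolynomial.C_surjective (Fin 0) G
    have hc : c ≠ 0 := fun h => hG (by rw [h, map_zero])
    refine ⟨0, by rw [MvPolynomial.mem_support_iff, MvPolynomial.coeff_zero_C]; exact hc, ?_⟩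
    have : ((Fintype.piFinset A).filter fun x => MvPolynomial.eval x (MvPolynomial.C c) ≠ 0)
        = Fintype.piFinset A := by
      apply Finset.filter_true_of_mem
      intro x _
      simpa using hc
    rw [this, Fintype.card_piFinset]
    simp
  | succ n IH =>
    intro A G hG
    set g := MvPolynomial.finSuccEquiv K n G with hg
    have hgne : g ≠ 0 := by
      intro h
      apply hG
      have h2 : (MvPolynomial.finSuccEquiv K n) G = (MvPolynomial.finSuccEquiv K n) 0 := by
        rw [map_zero, ← hg, h]
      exact (MvPolynomial.finSuccEquiv K n).injective h2
    set r := g.natDegree with hr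
    set c := g.leadingCoeff with hc
    have hcne : c ≠ 0 := Polynomial.leadingCoeff_ne_zero.mpr hgne
    clear_value g r c
    obtain ⟨u', hu'mem, hu'count⟩ := IH (fun i => A i.succ) c hcne
    refine ⟨Finsupp.cons r u', ?_, ?_⟩
    · rw [MvPolynomial.mem_support_iff, ← MvPolynomial.finSuccEquiv_coeff_coeff u' G r, ← hg,
        hr, Polynomial.coeff_natDegree, ← hc]
      exact MvPolynomial.mem_support_iff.mp hu'mem
    · -- counting
      rw [count_split A (fun x => MvPolynomial.eval x G ≠ 0)]
      -- pointwise bound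
      have hpt : ∀ yv ∈ (Fintype.piFinset fun i => A i.succ).filter
          (fun yv => MvPolynomial.eval yv c ≠ 0),
          (A 0).card - r ≤ ((A 0).filter fun a => MvPolynomial.eval (Fin.cons a yv) G ≠ 0).card := by
        intro yv hyv
        rw [Finset.mem_filter] at hyv
        set q := Polynomial.map (MvPolynomial.eval yv) g with hq
        have heval : ∀ a : K, MvPolynomial.eval (Fin.cons a yv) G = q.eval a := by
          intro a
          rw [hq, hg, ← MvPolynomial.eval_eq_eval_mv_eval']
        have hqc : q.coeff r = MvPolynomial.eval yv c := by
          rw [hq, Polynomial.coeff_map, hr, Polynomial.coeff_natDegree, ← hc]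
        have hqne : q ≠ 0 := by
          intro h
          apply hyv.2
          rw [← hqc, h, Polynomial.coeff_zero]
        have hroots : ((A 0).filter fun a => MvPolynomial.eval (Fin.cons a yv) G = 0).card ≤ r := by
          have hsub : ((A 0).filter fun a => MvPolynomial.eval (Fin.cons a yv) G = 0)
              ⊆ q.roots.toFinset := by
            intro a ha
            rw [Finset.mem_filter] at ha
            rw [Multiset.mem_toFinset, Polynomial.mem_roots hqne]
            rw [heval a] at ha
            exact ha.2
          calc ((A 0).filter fun a => MvPolynomial.eval (Fin.cons a yv) G = 0).card
              ≤ q.roots.toFinset.card := Finset.card_le_card hsub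
            _ ≤ Multiset.card q.roots := Multiset.toFinset_card_le _
            _ ≤ q.natDegree := Polynomial.card_roots' q
            _ ≤ r := by rw [hr]; exact Polynomial.natDegree_map_le
        have hpart : ((A 0).filter fun a => MvPolynomial.eval (Fin.cons a yv) G = 0).card
            + ((A 0).filter fun a => MvPolynomial.eval (Fin.cons a yv) G ≠ 0).card
            = (A 0).card := Finset.card_filter_add_card_filter_not
          (s := A 0) (p := fun a => MvPolynomial.eval (Fin.cons a yv) G = 0)
        omega
      calc ∏ i, ((A i).card - (Finsupp.cons r u') i)
          = ((A 0).card - r) * ∏ i : Fin n, ((A i.succ).card - u' i) := by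
            rw [Fin.prod_univ_succ]
            simp [Finsupp.cons_zero, Finsupp.cons_succ]
        _ ≤ ((A 0).card - r) * ((Fintype.piFinset fun i => A i.succ).filter
              (fun yv => MvPolynomial.eval yv c ≠ 0)).card :=
            Nat.mul_le_mul_left _ hu'count
        _ = ∑ yv ∈ (Fintype.piFinset fun i => A i.succ).filter
              (fun yv => MvPolynomial.eval yv c ≠ 0), ((A 0).card - r) := by
            rw [Finset.sum_const, smul_eq_mul, Nat.mul_comm]
        _ ≤ ∑ yv ∈ (Fintype.piFinset fun i => A i.succ).filter
              (fun yv => MvPolynomial.eval yv c ≠ 0),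
              ((A 0).filter fun a => MvPolynomial.eval (Fin.cons a yv) G ≠ 0).card :=
            Finset.sum_le_sum hpt
        _ ≤ ∑ yv ∈ Fintype.piFinset (fun i => A i.succ),
              ((A 0).filter fun a => MvPolynomial.eval (Fin.cons a yv) G ≠ 0).card :=
            Finset.sum_le_sum_of_subset (Finset.filter_subset _ _)

end AF7

theorem stmt_7 {K : Type*} [Field K] [DecidableEq K] (n : ℕ) (A : Fin n → Finset K)
    (hA : ∀ i, 2 ≤ (A i).card)
    (hmono : ∀ i j : Fin n, i ≤ j → (A i).card ≤ (A j).card)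
    (G : MvPolynomial (Fin n) K) (d k ℓ : ℕ)
    (hd : G.totalDegree = d) (hd1 : 1 ≤ d)
    (hdegti : ∀ i, MvPolynomial.degreeOf i G ≤ (A i).card - 1)
    (hk : k < n)
    (hdecomp : d = (∑ i ∈ Finset.univ.filter (fun i : Fin n => (i : ℕ) < k),
        ((A i).card - 1)) + ℓ)
    (hl1 : 1 ≤ ℓ) (hl2 : ℓ ≤ (A ⟨k, hk⟩).card - 1) :
    (((Fintype.piFinset A).filter fun x => MvPolynomial.eval x G = 0).card : ℤ) ≤
      (∏ i ∈ Finset.univ.filter (fun i : Fin n => k < (i : ℕ)), ((A i).card : ℤ)) *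
        ((∏ i ∈ Finset.univ.filter (fun i : Fin n => (i : ℕ) ≤ k), ((A i).card : ℤ)) -
          ((A ⟨k, hk⟩).card : ℤ) + (ℓ : ℤ)) := by
  have hG : G ≠ 0 := by
    intro h
    rw [h, MvPolynomial.totalDegree_zero] at hd
    omega
  obtain ⟨u, humem, hucount⟩ := AF7.key n A G hG
  have hui : ∀ i, u i ≤ (A i).card - 1 := by
    intro i
    refine le_trans ?_ (hdegti i)
    rw [MvPolynomial.degreeOf_eq_sup]
    exact Finset.le_sup (f := fun m : Fin n →₀ ℕ => m i) humem
  have husum : ∑ i, u i ≤ d := by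
    have h1 := MvPolynomial.le_totalDegree humem
    rw [hd] at h1
    calc ∑ i, u i = u.sum fun _ e => e := (Finsupp.sum_fintype u (fun _ e => e) (fun _ => rfl)).symm
      _ ≤ d := h1
  set dK := (A ⟨k, hk⟩).card with hdK
  set m := dK - ℓ with hm
  have hdK2 : 2 ≤ dK := hA _
  have hm1 : 1 ≤ m := by omega
  have hm2 : m ≤ dK := by omega
  set y : Fin n → ℕ := fun i => (A i).card - u i with hy
  have hy1 : ∀ i, 1 ≤ y i := by
    intro i
    have h1 := hui i
    have h2 := hA i
    simp only [hy]
    omega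
  have hy2 : ∀ i, y i ≤ (A i).card := fun i => Nat.sub_le _ _
  have hsumyu : ∑ i, y i + ∑ i, u i = ∑ i, (A i).card := by
    rw [← Finset.sum_add_distrib]
    refine Finset.sum_congr rfl fun i _ => ?_
    have h1 := hui i
    have h2 := hA i
    simp only [hy]
    omega
  clear_value dK m y
  have hcardf : (Finset.univ.filter fun i : Fin n => (i : ℕ) < k).card = k :=
    AF7.card_filter_lt_fin n k hk.le
  have hltsum : (∑ i ∈ Finset.univ.filter (fun i : Fin n => (i : ℕ) < k), ((A i).card - 1)) + k
      = ∑ i ∈ Finset.univ.filter (fun i : Fin n => (i : ℕ) < k), (A i).card := by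
    have h2 : ∑ i ∈ Finset.univ.filter (fun i : Fin n => (i : ℕ) < k), ((A i).card - 1 + 1)
        = ∑ i ∈ Finset.univ.filter (fun i : Fin n => (i : ℕ) < k), (A i).card := by
      refine Finset.sum_congr rfl fun i _ => ?_
      have := hA i
      omega
    rw [Finset.sum_add_distrib, ← Finset.card_eq_sum_ones, hcardf] at h2
    exact h2
  have hsplit_le : Finset.univ.filter (fun i : Fin n => (i : ℕ) ≤ k)
      = insert ⟨k, hk⟩ (Finset.univ.filter fun i : Fin n => (i : ℕ) < k) := by
    ext i
    simp only [Finset.mem_filter, Finset.mem_insert, Finset.mem_univ, true_and, Fin.ext_iff]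
    omega
  have hknotmem : (⟨k, hk⟩ : Fin n) ∉ Finset.univ.filter (fun i : Fin n => (i : ℕ) < k) := by
    simp
  have hsum_le : ∑ i ∈ Finset.univ.filter (fun i : Fin n => (i : ℕ) ≤ k), (A i).card
      = dK + ∑ i ∈ Finset.univ.filter (fun i : Fin n => (i : ℕ) < k), (A i).card := by
    rw [hsplit_le, Finset.sum_insert hknotmem, hdK]
  have hnotle : Finset.univ.filter (fun i : Fin n => ¬ ((i : ℕ) ≤ k))
      = Finset.univ.filter (fun i : Fin n => k < (i : ℕ)) := by
    refine Finset.filter_congr fun i _ => ?_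
    simp [Nat.not_le]
  have hpartsum : (∑ i ∈ Finset.univ.filter (fun i : Fin n => (i : ℕ) ≤ k), (A i).card)
      + (∑ i ∈ Finset.univ.filter (fun i : Fin n => k < (i : ℕ)), (A i).card)
      = ∑ i, (A i).card := by
    rw [← hnotle]
    exact Finset.sum_filter_add_sum_filter_not _ _ _
  have hpartprod : (∏ i ∈ Finset.univ.filter (fun i : Fin n => (i : ℕ) ≤ k), (A i).card)
      * (∏ i ∈ Finset.univ.filter (fun i : Fin n => k < (i : ℕ)), (A i).card)
      = ∏ i, (A i).card := by
    rw [← hnotle]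
    exact Finset.prod_filter_mul_prod_filter_not _ _ _
  have hScomb : k + m + (∑ i ∈ Finset.univ.filter (fun i : Fin n => k < (i : ℕ)), (A i).card)
      ≤ ∑ i, y i := by omega
  have hcomb := AF7.comb (fun i => (A i).card) y hmono k hk m hm1 (by rw [hdK] at hm2; exact hm2) hy1 hy2 hScomb
  have hcomb2 : m * (∏ i ∈ Finset.univ.filter (fun i : Fin n => k < (i : ℕ)), (A i).card)
      ≤ ∏ i, y i := hcomb
  have hucount2 : (∏ i, y i)
      ≤ ((Fintype.piFinset A).filter fun x => MvPolynomial.eval x G ≠ 0).card := hucount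
  clear hcomb hucount
  have hpartcount :
      ((Fintype.piFinset A).filter fun x => MvPolynomial.eval x G = 0).card
      + ((Fintype.piFinset A).filter fun x => MvPolynomial.eval x G ≠ 0).card
      = ∏ i, (A i).card := by
    rw [← Fintype.card_piFinset A]
    exact Finset.card_filter_add_card_filter_not
      (s := Fintype.piFinset A) (p := fun x => MvPolynomial.eval x G = 0)
  -- final ℕ inequality
  have hfinal : ((Fintype.piFinset A).filter fun x => MvPolynomial.eval x G = 0).card
      + m * (∏ i ∈ Finset.univ.filter (fun i : Fin n => k < (i : ℕ)), (A i).card)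
      ≤ ∏ i, (A i).card := by omega
  -- cast to ℤ
  have hP1 : (∏ i ∈ Finset.univ.filter (fun i : Fin n => (i : ℕ) ≤ k), ((A i).card : ℤ))
      = ((∏ i ∈ Finset.univ.filter (fun i : Fin n => (i : ℕ) ≤ k), (A i).card : ℕ) : ℤ) := by
    push_cast
    rfl
  have hP2 : (∏ i ∈ Finset.univ.filter (fun i : Fin n => k < (i : ℕ)), ((A i).card : ℤ))
      = ((∏ i ∈ Finset.univ.filter (fun i : Fin n => k < (i : ℕ)), (A i).card : ℕ) : ℤ) := by
    push_cast
    rfl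
  rw [hP1, hP2]
  set Z := ((Fintype.piFinset A).filter fun x => MvPolynomial.eval x G = 0).card with hZ
  set P1 := ∏ i ∈ Finset.univ.filter (fun i : Fin n => (i : ℕ) ≤ k), (A i).card with hP1'
  set P2 := ∏ i ∈ Finset.univ.filter (fun i : Fin n => k < (i : ℕ)), (A i).card with hP2'
  have h1 : (Z : ℤ) + (m : ℤ) * (P2 : ℤ) ≤ ((P1 : ℤ) * (P2 : ℤ)) := by
    have := hfinal
    rw [← hpartprod] at this
    exact_mod_cast this
  have h3 : (m : ℤ) = (dK : ℤ) - (ℓ : ℤ) := by omega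
  calc (Z : ℤ) ≤ (P1 : ℤ) * (P2 : ℤ) - (m : ℤ) * (P2 : ℤ) := by linarith
    _ = (P2 : ℤ) * ((P1 : ℤ) - (dK : ℤ) + (ℓ : ℤ)) := by rw [h3]; ring
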